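/- Let $\hat{\theta}:\mathscr{X}^n\to\Theta$ be an estimator, $l:\Theta\times\Theta\to[0,\infty)$ a loss function, $\mathbf{P},\mathbf{Q}$ two probability distributions on a measurable space, and $\beta\in(0,1]$. Suppose that for all $\xi>0$, $\mathbb{P}_{\mathbf{X}\sim\mathbf{P}}\big( l(\hat{\theta}(\mathbf{X}),\theta) \ge A + (B+\xi^{\beta})/n \big) \le e^{-\xi}$. Then $\mathbb{E}_{\mathbf{X}\sim\mathbf{Q}}[ l(\hat{\theta}(\mathbf{X}),\theta) ] \le A + \big( B + (2+\tfrac{3}{2}\mathbf{K}(\mathbf{Q}\|\mathbf{P}))^{\beta} \big)/n$. -/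

import Mathlib

open MeasureTheory ProbabilityTheory Real Set
open scoped ENNReal

lemma kl_nonneg {α : Type*} [MeasurableSpace α] (μ ν : Measure α)
    [IsProbabilityMeasure μ] [IsProbabilityMeasure ν] (hμν : μ ≪ ν)
    (h : Integrable (llr μ ν) μ) : 0 ≤ ∫ x, llr μ ν x ∂μ := by
  have hint2 : Integrable (fun x ↦ (ν.rnDeriv μ x).toReal) μ :=
    Measure.integrable_toReal_rnDeriv
  have hexp : Integrable (fun x ↦ Real.exp (- llr μ ν x)) μ :=
    hint2.congr (exp_neg_llr hμν).symm
  have hj : Real.exp (∫ x, - llr μ ν x ∂μ) ≤ ∫ x, Real.exp (- llr μ ν x) ∂μ := by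
    refine ConvexOn.map_integral_le convexOn_exp Real.continuous_exp.continuousOn
      isClosed_univ (Filter.Eventually.of_forall fun x => trivial) h.neg hexp
  have heq : ∫ x, Real.exp (- llr μ ν x) ∂μ = ∫ x, (ν.rnDeriv μ x).toReal ∂μ :=
    integral_congr_ae (exp_neg_llr hμν)
  have hle : ∫ x, (ν.rnDeriv μ x).toReal ∂μ ≤ 1 := by
    rw [Measure.integral_toReal_rnDeriv' (μ := ν) (ν := μ)]
    simp
  have : Real.exp (∫ x, - llr μ ν x ∂μ) ≤ 1 := by
    rw [heq] at hj; linarith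
  rw [integral_neg] at this
  nlinarith [Real.add_one_le_exp (-∫ x, llr μ ν x ∂μ)]

lemma dv_bound {α : Type*} [MeasurableSpace α] (P Q : Measure α)
    [IsProbabilityMeasure P] [IsProbabilityMeasure Q] (hac : Q ≪ P)
    (hint : Integrable (llr Q P) Q) (f : α → ℝ) (hfQ : Integrable f Q)
    (hfP : Integrable (fun x ↦ Real.exp (f x)) P) :
    ∫ x, f x ∂Q ≤ ∫ x, llr Q P x ∂Q + Real.log (∫ x, Real.exp (f x) ∂P) := by
  have h1 := integral_llr_tilted_right hac hfQ hfP hint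
  haveI := isProbabilityMeasure_tilted hfP
  have hac2 : Q ≪ P.tilted f := hac.trans (absolutelyContinuous_tilted hfP)
  have hil : Integrable (llr Q (P.tilted f)) Q :=
    integrable_llr_tilted_right hac hfQ hint hfP
  have h0 := kl_nonneg Q (P.tilted f) hac2 hil
  linarith

lemma exp_moment {α : Type*} [MeasurableSpace α] (P : Measure α)
    [IsProbabilityMeasure P] (ζ : α → ℝ) (hmeas : Measurable ζ)
    (hnn : ∀ x, 0 ≤ ζ x) (C : ℝ) (hb : ∀ x, ζ x ≤ C)
    (htail : ∀ ξ : ℝ, 0 < ξ → P {x | ξ ≤ ζ x} ≤ ENNReal.ofReal (Real.exp (-ξ))) :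
    ∫ x, Real.exp ((2/3) * ζ x) ∂P ≤ 3 := by
  set W : α → ℝ := fun x ↦ Real.exp ((2/3) * ζ x) with hW
  have hWmeas : Measurable W := (hmeas.const_mul _).exp
  have hWnn : ∀ x, 0 ≤ W x := fun x ↦ (Real.exp_pos _).le
  have key : ∫⁻ t in Ioi (0:ℝ), P {x | t < W x} ≤ 3 := by
    rw [← Ioc_union_Ioi_eq_Ioi (zero_le_one (α := ℝ)),
      lintegral_union measurableSet_Ioi (Ioc_disjoint_Ioi le_rfl)]
    have h1 : ∫⁻ t in Ioc (0:ℝ) 1, P {x | t < W x} ≤ 1 := by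
      calc ∫⁻ t in Ioc (0:ℝ) 1, P {x | t < W x}
          ≤ ∫⁻ _ in Ioc (0:ℝ) 1, 1 := by
            refine setLIntegral_mono measurable_const fun t _ ↦ prob_le_one
        _ = 1 := by simp
    have h2 : ∫⁻ t in Ioi (1:ℝ), P {x | t < W x} ≤ ENNReal.ofReal 2 := by
      have hpt : ∀ t ∈ Ioi (1:ℝ), P {x | t < W x} ≤ ENNReal.ofReal (t ^ (-(3/2) : ℝ)) := by
        intro t ht
        have ht1 : (1:ℝ) < t := ht
        have hlogt : 0 < Real.log t := Real.log_pos ht1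
        have hsub : {x | t < W x} ⊆ {x | (3/2) * Real.log t ≤ ζ x} := by
          intro x hx
          have : Real.log t < (2/3) * ζ x := by
            have := Real.log_lt_log (lt_trans zero_lt_one ht1) hx
            rwa [Real.log_exp] at this
          simp only [mem_setOf_eq]; linarith
        refine (measure_mono hsub).trans ((htail _ (by positivity)).trans_eq ?_)
        rw [Real.rpow_def_of_pos (lt_trans zero_lt_one ht1)]
        ring_nf
      calc ∫⁻ t in Ioi (1:ℝ), P {x | t < W x}
          ≤ ∫⁻ t in Ioi (1:ℝ), ENNReal.ofReal (t ^ (-(3/2) : ℝ)) := by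
            refine setLIntegral_mono (by fun_prop) hpt
        _ = ENNReal.ofReal (∫ t in Ioi (1:ℝ), t ^ (-(3/2) : ℝ)) := by
            rw [ofReal_integral_eq_lintegral_ofReal
              (integrableOn_Ioi_rpow_of_lt (by norm_num) one_pos)
              (ae_restrict_of_forall_mem measurableSet_Ioi fun t ht ↦
                Real.rpow_nonneg (zero_lt_one.trans ht).le _)]
        _ = ENNReal.ofReal 2 := by
            rw [integral_Ioi_rpow_of_lt (by norm_num) one_pos]
            norm_num
    calc (∫⁻ t in Ioc (0:ℝ) 1, P {x | t < W x}) + ∫⁻ t in Ioi (1:ℝ), P {x | t < W x}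
        ≤ 1 + ENNReal.ofReal 2 := add_le_add h1 h2
      _ = 3 := by rw [← ENNReal.ofReal_one, ← ENNReal.ofReal_add] <;> norm_num
  have hlc := lintegral_eq_lintegral_meas_lt P
    (Filter.Eventually.of_forall hWnn) hWmeas.aemeasurable
  have hint : Integrable W P := by
    refine ⟨hWmeas.aestronglyMeasurable, HasFiniteIntegral.of_bounded
      (C := Real.exp ((2/3) * C)) (Filter.Eventually.of_forall fun x ↦ ?_)⟩
    rw [Real.norm_eq_abs, abs_of_nonneg (hWnn x)]
    exact Real.exp_le_exp.mpr (by nlinarith [hb x])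
  rw [integral_eq_lintegral_of_nonneg_ae (Filter.Eventually.of_forall hWnn)
    hWmeas.aestronglyMeasurable]
  rw [hlc] at *
  calc (∫⁻ t in Ioi (0:ℝ), P {x | t < W x}).toReal
      ≤ (3 : ℝ≥0∞).toReal := ENNReal.toReal_mono (by norm_num) key
    _ = 3 := by norm_num

lemma log_three_le : Real.log 3 ≤ 4/3 := by
  have h1 := Real.log_le_sub_one_of_pos (x := 3 * Real.exp (-1)) (by positivity)
  rw [Real.log_mul (by norm_num) (Real.exp_ne_zero _), Real.log_exp] at h1
  have h2 : Real.exp (-1) * Real.exp 1 = 1 := by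
    rw [← Real.exp_add]; norm_num
  nlinarith [Real.exp_one_gt_d9, Real.exp_pos (-1)]

/-- An exponential deviation inequality under `P` transfers to a risk bound in
expectation under `Q`, at the price of the Kullback-Leibler divergence `K(Q‖P) = ∫ llr Q P dQ`. -/
theorem deviation_to_expectation_kl
    {𝒳 Θ : Type*} [MeasurableSpace 𝒳]
    (P Q : Measure 𝒳) [IsProbabilityMeasure P] [IsProbabilityMeasure Q]
    (θhat : 𝒳 → Θ) (θ : Θ) (l : Θ → Θ → ℝ) (hl : ∀ a b, 0 ≤ l a b)
    (n : ℕ) (hn : 0 < n) (A B : ℝ) (β : ℝ) (hβ0 : 0 < β) (hβ1 : β ≤ 1)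
    (hdev : ∀ ξ : ℝ, 0 < ξ →
      P {x | A + (B + ξ ^ β) / n ≤ l (θhat x) θ} ≤ ENNReal.ofReal (Real.exp (-ξ)))
    (hac : Q ≪ P) (hint : Integrable (llr Q P) Q) :
    ∫⁻ x, ENNReal.ofReal (l (θhat x) θ) ∂Q ≤
      ENNReal.ofReal (A + (B + (2 + (3 / 2) * ∫ x, llr Q P x ∂Q) ^ β) / n) := by
  set K := ∫ x, llr Q P x ∂Q with hKdef
  have hK0 : 0 ≤ K := kl_nonneg Q P hac hint
  have hnR : (0:ℝ) < (n:ℝ) := by exact_mod_cast hn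
  rw [show (∫⁻ x, ENNReal.ofReal (l (θhat x) θ) ∂Q) =
    lintegral Q (fun x ↦ ENNReal.ofReal (l (θhat x) θ)) from rfl, lintegral_def]
  refine iSup_le fun g ↦ iSup_le fun hg ↦ ?_
  rw [← g.lintegral_eq_lintegral Q]
  -- the bounded measurable minorant m
  have hfin : ∀ x, g x ≠ ∞ := fun x ↦ ((hg x).trans_lt ENNReal.ofReal_lt_top).ne
  set m : 𝒳 → ℝ := fun x ↦ (g x).toReal with hmdef
  have hmmeas : Measurable m := g.measurable.ennreal_toReal
  have hm0 : ∀ x, 0 ≤ m x := fun x ↦ ENNReal.toReal_nonneg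
  have hml : ∀ x, m x ≤ l (θhat x) θ := by
    intro x
    have := ENNReal.toReal_mono ENNReal.ofReal_ne_top (hg x)
    rwa [ENNReal.toReal_ofReal (hl _ _)] at this
  obtain ⟨M, hM0, hbm⟩ : ∃ M : ℝ, 0 ≤ M ∧ ∀ x, m x ≤ M := by
    refine ⟨(g.range.sup id).toReal, ENNReal.toReal_nonneg, fun x ↦ ?_⟩
    have hsup : g.range.sup id ≠ ∞ := by
      refine (Finset.sup_lt_iff (by simp : (⊥:ℝ≥0∞) < ⊤)).mpr (fun b hb ↦ ?_) |>.ne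
      obtain ⟨y, rfl⟩ := SimpleFunc.mem_range.mp hb
      exact (hfin y).lt_top
    exact ENNReal.toReal_mono hsup (Finset.le_sup (f := id) (g.mem_range_self x))
  -- ζ
  set ζ : 𝒳 → ℝ := fun x ↦ (max ((n:ℝ) * (m x - A) - B) 0) ^ (1/β) with hζdef
  have hmaxmeas : Measurable fun x ↦ max ((n:ℝ) * (m x - A) - B) 0 :=
    (((hmmeas.sub measurable_const).const_mul _).sub measurable_const).max measurable_const
  have hζmeas : Measurable ζ :=
    (Real.continuous_rpow_const (by positivity)).measurable.comp hmaxmeas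
  have hζ0 : ∀ x, 0 ≤ ζ x := fun x ↦ Real.rpow_nonneg (le_max_right _ _) _
  have hζb : ∀ x, ζ x ≤ (max ((n:ℝ) * (M - A) - B) 0) ^ (1/β) := by
    intro x
    exact Real.rpow_le_rpow (le_max_right _ _)
      (max_le_max (by nlinarith [hbm x]) le_rfl) (by positivity)
  have hpow : ∀ x, ζ x ^ β = max ((n:ℝ) * (m x - A) - B) 0 := by
    intro x
    rw [hζdef, ← Real.rpow_mul (le_max_right _ _), one_div,
      inv_mul_cancel₀ hβ0.ne', Real.rpow_one]
  -- tail bound for ζ under P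
  have htail : ∀ ξ : ℝ, 0 < ξ → P {x | ξ ≤ ζ x} ≤ ENNReal.ofReal (Real.exp (-ξ)) := by
    intro ξ hξ
    refine (measure_mono ?_).trans (hdev ξ hξ)
    intro x hx
    simp only [mem_setOf_eq] at hx ⊢
    have h1 : ξ ^ β ≤ ζ x ^ β := Real.rpow_le_rpow hξ.le hx hβ0.le
    rw [hpow x] at h1
    have hξβ : 0 < ξ ^ β := Real.rpow_pos_of_pos hξ _
    have h2 : ξ ^ β ≤ (n:ℝ) * (m x - A) - B := by
      rcases le_max_iff.mp h1 with h | h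
      · exact h
      · linarith
    have h3 : A + (B + ξ ^ β) / n ≤ m x := by
      have h4 : (B + ξ ^ β) / n ≤ m x - A := by
        rw [div_le_iff₀ hnR]; nlinarith
      linarith
    exact h3.trans (hml x)
  -- exponential moment + DV
  have hexpP3 : ∫ x, Real.exp ((2/3) * ζ x) ∂P ≤ 3 :=
    exp_moment P ζ hζmeas hζ0 _ hζb htail
  have hζintQ : Integrable ζ Q := by
    refine ⟨hζmeas.aestronglyMeasurable, HasFiniteIntegral.of_bounded
      (C := (max ((n:ℝ) * (M - A) - B) 0) ^ (1/β))
      (Filter.Eventually.of_forall fun x ↦ ?_)⟩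
    rw [Real.norm_eq_abs, abs_of_nonneg (hζ0 x)]
    exact hζb x
  have hexpPint : Integrable (fun x ↦ Real.exp ((2/3) * ζ x)) P := by
    refine ⟨((hζmeas.const_mul _).exp).aestronglyMeasurable,
      HasFiniteIntegral.of_bounded
      (C := Real.exp ((2/3) * ((max ((n:ℝ) * (M - A) - B) 0) ^ (1/β))))
      (Filter.Eventually.of_forall fun x ↦ ?_)⟩
    rw [Real.norm_eq_abs, abs_of_nonneg (Real.exp_pos _).le]
    exact Real.exp_le_exp.mpr (by nlinarith [hζb x])
  have hdvb := dv_bound P Q hac hint _ (hζintQ.const_mul (2/3)) hexpPint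
  have hlog : Real.log (∫ x, Real.exp ((2/3) * ζ x) ∂P) ≤ 4/3 :=
    (Real.log_le_log (integral_exp_pos hexpPint) hexpP3).trans log_three_le
  have hζQ : ∫ x, ζ x ∂Q ≤ 2 + (3/2) * K := by
    rw [integral_const_mul] at hdvb
    linarith
  -- Jensen for rpow
  have hpowint : Integrable (fun x ↦ ζ x ^ β) Q := by
    refine (Integrable.congr ?_ (Filter.Eventually.of_forall fun x ↦ (hpow x).symm))
    refine ⟨hmaxmeas.aestronglyMeasurable, HasFiniteIntegral.of_bounded
      (C := max ((n:ℝ) * (M - A) - B) 0) (Filter.Eventually.of_forall fun x ↦ ?_)⟩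
    rw [Real.norm_eq_abs, abs_of_nonneg (le_max_right _ _)]
    exact max_le_max (by nlinarith [hbm x]) le_rfl
  have hjensen : ∫ x, ζ x ^ β ∂Q ≤ (∫ x, ζ x ∂Q) ^ β := by
    exact ConcaveOn.le_map_integral (Real.concaveOn_rpow hβ0.le hβ1)
      ((Real.continuous_rpow_const hβ0.le).continuousOn) isClosed_Ici
      (Filter.Eventually.of_forall fun x ↦ hζ0 x) hζintQ hpowint
  have hfinal : ∫ x, m x ∂Q ≤ A + (B + (2 + (3/2) * K) ^ β) / n := by
    have hstep : ∫ x, m x ∂Q ≤ ∫ x, A + (B + ζ x ^ β) / n ∂Q := by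
      refine integral_mono ⟨hmmeas.aestronglyMeasurable,
        HasFiniteIntegral.of_bounded (C := M)
        (Filter.Eventually.of_forall fun x ↦ ?_)⟩
        ((integrable_const A).add (((integrable_const B).add hpowint).div_const _)) fun x ↦ ?_
      · rw [Real.norm_eq_abs, abs_of_nonneg (hm0 x)]; exact hbm x
      · have h1 : (n:ℝ) * (m x - A) - B ≤ ζ x ^ β := (hpow x).symm ▸ le_max_left _ _
        have h4 : m x - A ≤ (B + ζ x ^ β) / n := by
          rw [le_div_iff₀ hnR]; nlinarith
        linarith
    have hcomp : ∫ x, A + (B + ζ x ^ β) / n ∂Q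
        = A + (B + ∫ x, ζ x ^ β ∂Q) / n := by
      have hre : (fun x ↦ A + (B + ζ x ^ β) / n) = fun x ↦ (A + B / n) + (ζ x ^ β) / n := by
        funext x; ring
      rw [hre, integral_add (integrable_const _) (hpowint.div_const _), integral_const,
        integral_div]
      simp only [measure_univ, probReal_univ, ENNReal.toReal_one, smul_eq_mul, one_mul]
      ring
    rw [hcomp] at hstep
    refine hstep.trans ?_
    have : (∫ x, ζ x ∂Q) ^ β ≤ (2 + (3/2) * K) ^ β :=
      Real.rpow_le_rpow (integral_nonneg hζ0) hζQ hβ0.le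
    have h2 : ∫ x, ζ x ^ β ∂Q ≤ (2 + (3/2) * K) ^ β := hjensen.trans this
    gcongr
  -- conclude
  calc ∫⁻ x, g x ∂Q = ∫⁻ x, ENNReal.ofReal (m x) ∂Q :=
        lintegral_congr fun x ↦ (ENNReal.ofReal_toReal (hfin x)).symm
    _ = ENNReal.ofReal (∫ x, m x ∂Q) :=
        (ofReal_integral_eq_lintegral_ofReal
          ⟨hmmeas.aestronglyMeasurable, HasFiniteIntegral.of_bounded (C := M)
            (Filter.Eventually.of_forall fun x ↦ by
              rw [Real.norm_eq_abs, abs_of_nonneg (hm0 x)]; exact hbm x)⟩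
          (Filter.Eventually.of_forall hm0)).symm
    _ ≤ _ := ENNReal.ofReal_le_ofReal hfinal
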